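/- (Bound on the weighted covariate–residual covariance in the direction of the projection coefficient.) Suppose each block has n_{[m]} ≥ 2 units, β ∈ ℝ^p, and ε_i = Y_i − Ȳ_{[m]} − (x_i − x̄_{[m]})ᵀ β for i ∈ [m]. If L > 0 satisfies n⁻¹ ∑_{m=1}^M ∑_{i∈[m]} (Y_i − Ȳ_{[m]})² ≤ L^{1/2} and n⁻¹ ∑_{m=1}^M ∑_{i∈[m]} ε_i⁴ ≤ L, then ∑_{m=1}^M π_{[m]} | S_{[m]Xε}ᵀ β | ≤ 4 L^{1/2}, where S_{[m]Xε}ᵀ β = (n_{[m]} − 1)⁻¹ ∑_{i∈[m]} (x_i − x̄_{[m]})ᵀ β · ε_i. -/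

import Mathlib

open Finset

/-- **Bound on the weighted covariate–residual covariance in the direction of the
projection coefficient.**  With residuals `ε_i = Y_i − Ȳ_[m] − (x_i − x̄_[m])ᵀβ`,
second-moment bound `n⁻¹ ∑ₘ∑ᵢ (Yᵢ − Ȳ_[m])² ≤ L^{1/2}` and fourth-moment bound
`n⁻¹ ∑ₘ∑ᵢ εᵢ⁴ ≤ L`, one has `∑ₘ π_[m] |S_[m]Xεᵀβ| ≤ 4L^{1/2}`, where
`S_[m]Xεᵀβ = (n_[m] − 1)⁻¹ ∑_{i∈[m]} (xᵢ − x̄_[m])ᵀβ · εᵢ`. -/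
theorem weighted_cov_residual_direction_bound (M p : ℕ) (nb : Fin M → ℕ)
    (hnb : ∀ m, 2 ≤ nb m)
    (x : (m : Fin M) → Fin (nb m) → Fin p → ℝ)
    (Y : (m : Fin M) → Fin (nb m) → ℝ) (β : Fin p → ℝ) (L : ℝ) (hL : 0 < L) :
    let n : ℝ := ∑ m, (nb m : ℝ)
    let π : Fin M → ℝ := fun m => (nb m : ℝ) / n
    let xbar : (m : Fin M) → Fin p → ℝ := fun m j => (∑ i, x m i j) / (nb m : ℝ)
    let Ybar : (m : Fin M) → ℝ := fun m => (∑ i, Y m i) / (nb m : ℝ)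
    let ε : (m : Fin M) → Fin (nb m) → ℝ := fun m i =>
      Y m i - Ybar m - ∑ j, (x m i j - xbar m j) * β j
    ((1 / n) * ∑ m, ∑ i, (Y m i - Ybar m) ^ 2 ≤ Real.sqrt L) →
    ((1 / n) * ∑ m, ∑ i, ε m i ^ 4 ≤ L) →
    ∑ m, π m * |(1 / ((nb m : ℝ) - 1)) *
        ∑ i, (∑ j, (x m i j - xbar m j) * β j) * ε m i|
      ≤ 4 * Real.sqrt L := by
  intro n π xbar Ybar ε h2 h4
  rcases Nat.eq_zero_or_pos M with hM | hM
  · subst hM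
    simp only [Finset.univ_eq_empty, Finset.sum_empty]
    positivity
  · set s := Real.sqrt L with hsdef
    have hs : 0 < s := Real.sqrt_pos.mpr hL
    have hs2 : s ^ 2 = L := Real.sq_sqrt hL.le
    have hnb' : ∀ m, (2:ℝ) ≤ (nb m : ℝ) := fun m => by exact_mod_cast hnb m
    have hn : 0 < n := by
      refine Finset.sum_pos (fun m _ => by linarith [hnb' m]) ⟨⟨0, hM⟩, Finset.mem_univ _⟩
    -- second moment bound
    have S2le : ∑ m, ∑ i, (Y m i - Ybar m) ^ 2 ≤ n * s := by
      have h := mul_le_mul_of_nonneg_left h2 hn.le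
      calc ∑ m, ∑ i, (Y m i - Ybar m) ^ 2
          = n * ((1 / n) * ∑ m, ∑ i, (Y m i - Ybar m) ^ 2) := by
            field_simp
        _ ≤ n * s := h
    have S4le : ∑ m, ∑ i, ε m i ^ 4 ≤ n * L := by
      have h := mul_le_mul_of_nonneg_left h4 hn.le
      calc ∑ m, ∑ i, ε m i ^ 4
          = n * ((1 / n) * ∑ m, ∑ i, ε m i ^ 4) := by field_simp
        _ ≤ n * L := h
    -- bound on sum of squared residuals
    have Tle : ∑ m, ∑ i, ε m i ^ 2 ≤ n * s := by
      have step1 : ∑ m, ∑ i, ε m i ^ 2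
          ≤ ∑ m, ∑ i, (s / 2 + ε m i ^ 4 / (2 * s)) := by
        refine Finset.sum_le_sum fun m _ => Finset.sum_le_sum fun i _ => ?_
        rw [div_add_div _ _ (by norm_num) (by positivity), le_div_iff₀ (by positivity)]
        nlinarith [sq_nonneg (ε m i ^ 2 - s)]
      have step2 : ∑ m, ∑ i, (s / 2 + ε m i ^ 4 / (2 * s))
          = n * (s / 2) + (∑ m, ∑ i, ε m i ^ 4) / (2 * s) := by
        simp only [Finset.sum_add_distrib, Finset.sum_const, Finset.card_univ,
          Fintype.card_fin, nsmul_eq_mul, ← Finset.sum_div, ← Finset.sum_mul]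
        rfl
      have step3 : (∑ m, ∑ i, ε m i ^ 4) / (2 * s) ≤ n * (s / 2) := by
        rw [div_le_iff₀ (by positivity)]
        nlinarith [S4le]
      calc ∑ m, ∑ i, ε m i ^ 2
          ≤ n * (s / 2) + (∑ m, ∑ i, ε m i ^ 4) / (2 * s) := by
            rw [← step2]; exact step1
        _ ≤ n * (s / 2) + n * (s / 2) := by linarith
        _ = n * s := by ring
    -- per-block bound
    have key : ∀ m : Fin M,
        π m * |(1 / ((nb m : ℝ) - 1)) *
          ∑ i, (∑ j, (x m i j - xbar m j) * β j) * ε m i|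
        ≤ (2 / n) * ∑ i, ((Y m i - Ybar m) ^ 2 / 2 + (3 / 2) * ε m i ^ 2) := by
      intro m
      have hb1 : (0:ℝ) < (nb m : ℝ) - 1 := by linarith [hnb' m]
      have habs : |∑ i, (∑ j, (x m i j - xbar m j) * β j) * ε m i|
          ≤ ∑ i, ((Y m i - Ybar m) ^ 2 / 2 + (3 / 2) * ε m i ^ 2) := by
        refine (Finset.abs_sum_le_sum_abs _ _).trans (Finset.sum_le_sum fun i _ => ?_)
        have hA : ∑ j, (x m i j - xbar m j) * β j = (Y m i - Ybar m) - ε m i := by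
          show _ = (Y m i - Ybar m) -
            (Y m i - Ybar m - ∑ j, (x m i j - xbar m j) * β j)
          ring
        rw [hA]
        set D := Y m i - Ybar m with hD
        set e := ε m i with he
        clear_value D e
        have h1 : |(D - e) * e| ≤ |D * e| + e ^ 2 := by
          have hrw : (D - e) * e = D * e + -(e ^ 2) := by ring
          rw [hrw]
          refine (abs_add_le _ _).trans ?_
          rw [abs_neg, abs_of_nonneg (sq_nonneg e)]
        have h2' : |D * e| ≤ D ^ 2 / 2 + e ^ 2 / 2 := by
          rw [abs_mul]
          nlinarith [sq_nonneg (|D| - |e|), sq_abs D, sq_abs e]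
        linarith
      have hcoef : π m * (1 / ((nb m : ℝ) - 1)) ≤ 2 / n := by
        show (nb m : ℝ) / n * (1 / ((nb m : ℝ) - 1)) ≤ 2 / n
        rw [div_mul_div_comm, div_le_div_iff₀ (by positivity) hn]
        nlinarith [hnb' m, hn]
      have habs0 : (0:ℝ) ≤ |∑ i, (∑ j, (x m i j - xbar m j) * β j) * ε m i| :=
        abs_nonneg _
      have hπ : (0:ℝ) ≤ π m := by
        show (0:ℝ) ≤ (nb m : ℝ) / n
        positivity
      calc π m * |(1 / ((nb m : ℝ) - 1)) *
            ∑ i, (∑ j, (x m i j - xbar m j) * β j) * ε m i|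
          = (π m * (1 / ((nb m : ℝ) - 1))) *
            |∑ i, (∑ j, (x m i j - xbar m j) * β j) * ε m i| := by
            rw [abs_mul, abs_of_pos (by positivity : (0:ℝ) < 1 / ((nb m : ℝ) - 1))]
            ring
        _ ≤ (2 / n) * |∑ i, (∑ j, (x m i j - xbar m j) * β j) * ε m i| :=
            mul_le_mul_of_nonneg_right hcoef habs0
        _ ≤ (2 / n) * ∑ i, ((Y m i - Ybar m) ^ 2 / 2 + (3 / 2) * ε m i ^ 2) :=
            mul_le_mul_of_nonneg_left habs (by positivity)
    calc ∑ m, π m * |(1 / ((nb m : ℝ) - 1)) *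
          ∑ i, (∑ j, (x m i j - xbar m j) * β j) * ε m i|
        ≤ ∑ m, (2 / n) * ∑ i, ((Y m i - Ybar m) ^ 2 / 2 + (3 / 2) * ε m i ^ 2) :=
          Finset.sum_le_sum fun m _ => key m
      _ = (2 / n) * ((∑ m, ∑ i, (Y m i - Ybar m) ^ 2) / 2
            + (3 / 2) * ∑ m, ∑ i, ε m i ^ 2) := by
          rw [← Finset.mul_sum]
          congr 1
          rw [Finset.sum_div, Finset.mul_sum]
          rw [← Finset.sum_add_distrib]
          refine Finset.sum_congr rfl fun m _ => ?_
          rw [Finset.sum_add_distrib, Finset.sum_div, Finset.mul_sum]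
      _ ≤ (2 / n) * ((n * s) / 2 + (3 / 2) * (n * s)) := by
          have h0 : (0:ℝ) ≤ 2 / n := by positivity
          refine mul_le_mul_of_nonneg_left ?_ h0
          have hT : (3 / 2 : ℝ) * ∑ m, ∑ i, ε m i ^ 2 ≤ (3 / 2) * (n * s) := by
            nlinarith [Tle]
          linarith [S2le]
      _ = 4 * s := by field_simp; ring
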